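/- Let Ψ₀ be a unit eigenvector of H with eigenvalue E₀ (the least eigenvalue), and let Ψ₁ be a unit eigenvector of H orthogonal to Ψ₀ with eigenvalue E₁. Then E₁ − E₀ ≥ (ω₊ − ω₋)³/((ω₊ − ω₋)² + 4b²) − b. -/

import Mathlib

open scoped ComplexConjugate

private lemma aux_expand' {V : Type*} [NormedAddCommGroup V] [InnerProductSpace ℂ V]
    (H : V →ₗ[ℂ] V) (hH : H.IsSymmetric) (v : V)
    (ωm ωp b : ℝ)
    (hdiag : (inner ℂ v (H v) : ℂ) = (ωm : ℂ))
    (hperp : ∀ φ : V, (inner ℂ v φ : ℂ) = 0 → ωp * ‖φ‖ ^ 2 ≤ ((inner ℂ φ (H φ) : ℂ)).re)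
    (hoff : ∀ φ : V, (inner ℂ v φ : ℂ) = 0 → ‖(inner ℂ v (H φ) : ℂ)‖ ≤ b * ‖φ‖)
    (c : ℂ) (φ : V) (hφ : (inner ℂ v φ : ℂ) = 0) :
    ωm * ‖c‖ ^ 2 + ωp * ‖φ‖ ^ 2 - 2 * b * ‖c‖ * ‖φ‖
      ≤ ((inner ℂ (c • v + φ) (H (c • v + φ)) : ℂ)).re := by
  have hsym : (inner ℂ φ (H v) : ℂ) = conj (inner ℂ v (H φ) : ℂ) := by
    rw [← hH φ v, ← inner_conj_symm]
  have hexp : (inner ℂ (c • v + φ) (H (c • v + φ)) : ℂ)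
      = conj c * c * inner ℂ v (H v) + (conj c * inner ℂ v (H φ) + conj (conj c * inner ℂ v (H φ)))
        + inner ℂ φ (H φ) := by
    simp only [map_add, map_smul, inner_add_left, inner_add_right, inner_smul_left,
      inner_smul_right, hsym, map_mul, Complex.conj_conj]
    ring
  rw [hexp, hdiag]
  have h1 : (conj c * c * (ωm : ℂ)).re = ωm * ‖c‖ ^ 2 := by
    have hc : conj c * c = ((‖c‖ ^ 2 : ℝ) : ℂ) := by
      rw [mul_comm, Complex.mul_conj, Complex.sq_norm]
    rw [hc, ← Complex.ofReal_mul, Complex.ofReal_re, mul_comm]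
  have h2 : (conj c * inner ℂ v (H φ) + conj (conj c * (inner ℂ v (H φ) : ℂ))).re
      = 2 * (conj c * (inner ℂ v (H φ) : ℂ)).re := by
    rw [Complex.add_conj]
    simp
  have h3 : -(‖c‖ * (b * ‖φ‖)) ≤ (conj c * (inner ℂ v (H φ) : ℂ)).re := by
    have h5 := Complex.abs_re_le_norm (conj c * (inner ℂ v (H φ) : ℂ))
    have h6 := neg_abs_le ((conj c * (inner ℂ v (H φ) : ℂ)).re)
    have habs : ‖(conj c * (inner ℂ v (H φ) : ℂ))‖ ≤ ‖c‖ * (b * ‖φ‖) := by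
      rw [norm_mul, Complex.norm_conj]
      exact mul_le_mul_of_nonneg_left (hoff φ hφ) (norm_nonneg c)
    linarith
  have h4 : ωp * ‖φ‖ ^ 2 ≤ ((inner ℂ φ (H φ) : ℂ)).re := hperp φ hφ
  simp only [Complex.add_re, h1, h2]
  nlinarith [norm_nonneg c]

private lemma aux_norm' {V : Type*} [NormedAddCommGroup V] [InnerProductSpace ℂ V]
    (v : V) (hv : ‖v‖ = 1) (c : ℂ) (φ : V) (hφ : (inner ℂ v φ : ℂ) = 0) :
    ‖c • v + φ‖ ^ 2 = ‖c‖ ^ 2 + ‖φ‖ ^ 2 := by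
  have h0 : (inner ℂ (c • v) φ : ℂ) = 0 := by rw [inner_smul_left, hφ, mul_zero]
  rw [@norm_add_sq ℂ]
  simp [h0, norm_smul, hv]

private lemma aux_E0_le' {V : Type*} [NormedAddCommGroup V] [InnerProductSpace ℂ V]
    [FiniteDimensional ℂ V]
    (H : V →ₗ[ℂ] V) (hH : H.IsSymmetric) (v : V) (hv : ‖v‖ = 1)
    (ωm : ℝ) (hdiag : (inner ℂ v (H v) : ℂ) = (ωm : ℂ))
    (E₀ : ℝ) (hE₀min : ∀ E : ℂ, Module.End.HasEigenvalue H E → E₀ ≤ E.re) :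
    E₀ ≤ ωm := by
  have hvne : v ≠ 0 := by
    intro h; rw [h, norm_zero] at hv; norm_num at hv
  haveI : Nontrivial V := ⟨v, 0, hvne⟩
  have hmin := hH.hasEigenvalue_iInf_of_finiteDimensional
  set μ : ℝ := ⨅ x : { x : V // x ≠ 0 }, RCLike.re (inner ℂ (H x) (x : V) : ℂ) / ‖(x : V)‖ ^ 2 with hμ
  have hE := hE₀min (μ : ℂ) hmin
  rw [Complex.ofReal_re] at hE
  have hC : ∃ C : ℝ, ∀ x : { x : V // x ≠ 0 },
      -C ≤ RCLike.re (inner ℂ (H x) (x : V) : ℂ) / ‖(x : V)‖ ^ 2 := by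
    refine ⟨‖LinearMap.toContinuousLinearMap H‖, fun x => ?_⟩
    have hx2 : (0:ℝ) < ‖(x : V)‖ ^ 2 := by
      have : (0:ℝ) < ‖(x : V)‖ := norm_pos_iff.2 x.2
      positivity
    rw [le_div_iff₀ hx2]
    have h1 := Complex.abs_re_le_norm (inner ℂ (H (x:V)) (x:V) : ℂ)
    have h2 := norm_inner_le_norm (𝕜 := ℂ) (H (x:V)) (x:V)
    have h3 := (LinearMap.toContinuousLinearMap H).le_opNorm (x:V)
    rw [LinearMap.coe_toContinuousLinearMap'] at h3
    have h4 := neg_abs_le ((inner ℂ (H (x:V)) (x:V) : ℂ).re)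
    have h5 : (0:ℝ) ≤ ‖(x:V)‖ := norm_nonneg _
    simp only [RCLike.re_to_complex]
    nlinarith [norm_nonneg (H (x:V))]
  obtain ⟨C, hC⟩ := hC
  have hle : μ ≤ RCLike.re (inner ℂ (H v) v : ℂ) / ‖v‖ ^ 2 :=
    ciInf_le ⟨-C, by rintro y ⟨x, rfl⟩; exact hC x⟩ (⟨v, hvne⟩ : { x : V // x ≠ 0 })
  have hray : RCLike.re (inner ℂ (H v) v : ℂ) / ‖v‖ ^ 2 = ωm := by
    rw [← inner_conj_symm, hdiag]
    simp [hv]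
  linarith

private lemma aux_alg (ωm ωp b E₀ E₁ a r t s : ℝ)
    (hδ : 0 < ωp - ωm) (hb : 0 ≤ b)
    (ha0 : 0 ≤ a) (hr0 : 0 ≤ r) (ht0 : 0 ≤ t) (hs0 : 0 ≤ s)
    (hn0 : a ^ 2 + r ^ 2 = 1) (hn1 : t ^ 2 + s ^ 2 = 1)
    (hE0lb : ωm * a ^ 2 + ωp * r ^ 2 - 2 * b * a * r ≤ E₀)
    (hE1lb : ωm * t ^ 2 + ωp * s ^ 2 - 2 * b * t * s ≤ E₁)
    (hE0ub : E₀ ≤ ωm) (hat : a * t ≤ r * s) :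
    (ωp - ωm) ^ 3 / ((ωp - ωm) ^ 2 + 4 * b ^ 2) - b ≤ E₁ - E₀ := by
  have hmn0 : ωm * a ^ 2 + ωm * r ^ 2 = ωm := by linear_combination ωm * hn0
  have hmn1 : ωm * t ^ 2 + ωm * s ^ 2 = ωm := by linear_combination ωm * hn1
  have hbn1 : b * t ^ 2 + b * s ^ 2 = b := by linear_combination b * hn1
  have hstep1 : (ωp - ωm) * r ≤ 2 * b * a := by
    rcases eq_or_lt_of_le hr0 with h | h
    · rw [← h, mul_zero]; positivity
    · have key : (ωp - ωm) * r * r ≤ 2 * b * a * r := by nlinarith [hE0lb, hE0ub, hmn0]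
      exact le_of_mul_le_mul_right key h
  have ha : 0 < a := by
    rcases eq_or_lt_of_le ha0 with h | h
    · exfalso
      have hr : r ≤ 0 := by
        have h2 : (ωp - ωm) * r ≤ (ωp - ωm) * 0 := by
          rw [← h] at hstep1
          simpa using hstep1
        exact le_of_mul_le_mul_left h2 hδ
      nlinarith [hn0]
    · exact h
  have hstep2 : (ωp - ωm) * t ≤ 2 * b * s := by
    have h1 : a * ((ωp - ωm) * t) ≤ a * (2 * b * s) := by
      nlinarith [mul_le_mul_of_nonneg_left hat hδ.le, mul_le_mul_of_nonneg_right hstep1 hs0]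
    exact le_of_mul_le_mul_left h1 ha
  have hstep3 : (ωp - ωm) ^ 2 ≤ ((ωp - ωm) ^ 2 + 4 * b ^ 2) * s ^ 2 := by
    have hsq : ((ωp - ωm) * t) * ((ωp - ωm) * t) ≤ (2 * b * s) * (2 * b * s) :=
      mul_self_le_mul_self (by positivity) hstep2
    nlinarith [hn1, sq_nonneg (ωp - ωm)]
  have hden : (0:ℝ) < (ωp - ωm) ^ 2 + 4 * b ^ 2 := by positivity
  have hstep4 : (ωp - ωm) ^ 3 / ((ωp - ωm) ^ 2 + 4 * b ^ 2) ≤ (ωp - ωm) * s ^ 2 := by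
    rw [div_le_iff₀ hden]
    nlinarith [mul_le_mul_of_nonneg_left hstep3 hδ.le]
  have h2bts : 2 * b * t * s ≤ b := by
    nlinarith [mul_nonneg hb (sq_nonneg (t - s)), hbn1]
  have hstep5 : ωm + (ωp - ωm) * s ^ 2 - b ≤ E₁ := by linarith [hE1lb, hmn1, h2bts]
  linarith

/-- If `Ψ₀` is a unit eigenvector of `H` with least eigenvalue `E₀` and `Ψ₁` is a
unit eigenvector orthogonal to `Ψ₀` with eigenvalue `E₁`, then
`E₁ − E₀ ≥ (ω₊ − ω₋)³/((ω₊ − ω₋)² + 4b²) − b`. Here `ωm = ω₋`, `ωp = ω₊`. -/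
theorem spectral_gap_lower_bound
    {V : Type*} [NormedAddCommGroup V] [InnerProductSpace ℂ V] [FiniteDimensional ℂ V]
    (H : V →ₗ[ℂ] V) (hH : H.IsSymmetric)
    (v : V) (hv : ‖v‖ = 1)
    (ωm ωp b : ℝ) (hω : ωm < ωp) (hb : 0 ≤ b)
    (hdiag : (inner ℂ v (H v) : ℂ) = (ωm : ℂ))
    (hperp : ∀ φ : V, (inner ℂ v φ : ℂ) = 0 → ωp * ‖φ‖ ^ 2 ≤ ((inner ℂ φ (H φ) : ℂ)).re)
    (hoff : ∀ φ : V, (inner ℂ v φ : ℂ) = 0 → ‖(inner ℂ v (H φ) : ℂ)‖ ≤ b * ‖φ‖)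
    (E₀ : ℝ) (hE₀ : Module.End.HasEigenvalue H (E₀ : ℂ))
    (hE₀min : ∀ E : ℂ, Module.End.HasEigenvalue H E → E₀ ≤ E.re)
    (Ψ₀ Ψ₁ : V) (E₁ : ℝ)
    (hΨ₀norm : ‖Ψ₀‖ = 1) (hΨ₀ : H Ψ₀ = (E₀ : ℂ) • Ψ₀)
    (hΨ₁norm : ‖Ψ₁‖ = 1) (horth : (inner ℂ Ψ₀ Ψ₁ : ℂ) = 0) (hΨ₁ : H Ψ₁ = (E₁ : ℂ) • Ψ₁) :
    (ωp - ωm) ^ 3 / ((ωp - ωm) ^ 2 + 4 * b ^ 2) - b ≤ E₁ - E₀ := by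
  have hδ : 0 < ωp - ωm := sub_pos.2 hω
  have hvv : (inner ℂ v v : ℂ) = 1 := by
    rw [inner_self_eq_norm_sq_to_K, hv]; norm_num
  -- decompositions
  set α : ℂ := inner ℂ v Ψ₀ with hαdef
  set φ : V := Ψ₀ - α • v with hφdef
  have hφperp : (inner ℂ v φ : ℂ) = 0 := by
    rw [hφdef, inner_sub_right, inner_smul_right, hvv, mul_one, ← hαdef, sub_self]
  have hΨ₀dec : Ψ₀ = α • v + φ := by rw [hφdef]; abel
  set β : ℂ := inner ℂ v Ψ₁ with hβdef
  set ψ : V := Ψ₁ - β • v with hψdef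
  have hψperp : (inner ℂ v ψ : ℂ) = 0 := by
    rw [hψdef, inner_sub_right, inner_smul_right, hvv, mul_one, ← hβdef, sub_self]
  have hΨ₁dec : Ψ₁ = β • v + ψ := by rw [hψdef]; abel
  set a : ℝ := ‖α‖ with hadef
  set r : ℝ := ‖φ‖ with hrdef
  set t : ℝ := ‖β‖ with htdef
  set s : ℝ := ‖ψ‖ with hsdef
  have ha0 : 0 ≤ a := norm_nonneg α
  have hr0 : 0 ≤ r := norm_nonneg φ
  have ht0 : 0 ≤ t := norm_nonneg β
  have hs0 : 0 ≤ s := norm_nonneg ψ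
  -- norms
  have hn0 : a ^ 2 + r ^ 2 = 1 := by
    have := aux_norm' v hv α φ hφperp
    rw [← hΨ₀dec, hΨ₀norm] at this
    simpa using this.symm
  have hn1 : t ^ 2 + s ^ 2 = 1 := by
    have := aux_norm' v hv β ψ hψperp
    rw [← hΨ₁dec, hΨ₁norm] at this
    simpa using this.symm
  -- Rayleigh values
  have hE0val : ((inner ℂ Ψ₀ (H Ψ₀) : ℂ)).re = E₀ := by
    rw [hΨ₀, inner_smul_right, inner_self_eq_norm_sq_to_K, hΨ₀norm]
    norm_num
  have hE1val : ((inner ℂ Ψ₁ (H Ψ₁) : ℂ)).re = E₁ := by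
    rw [hΨ₁, inner_smul_right, inner_self_eq_norm_sq_to_K, hΨ₁norm]
    norm_num
  have hE0lb : ωm * a ^ 2 + ωp * r ^ 2 - 2 * b * a * r ≤ E₀ := by
    have := aux_expand' H hH v ωm ωp b hdiag hperp hoff α φ hφperp
    rw [← hΨ₀dec, hE0val] at this
    exact this
  have hE1lb : ωm * t ^ 2 + ωp * s ^ 2 - 2 * b * t * s ≤ E₁ := by
    have := aux_expand' H hH v ωm ωp b hdiag hperp hoff β ψ hψperp
    rw [← hΨ₁dec, hE1val] at this
    exact this
  have hE0ub : E₀ ≤ ωm := aux_E0_le' H hH v hv ωm hdiag E₀ hE₀min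
  have hφv : (inner ℂ φ v : ℂ) = 0 := by
    rw [← inner_conj_symm, hφperp, map_zero]
  -- orthogonality: conj α * β = - inner φ ψ
  have horth' : conj α * β = -(inner ℂ φ ψ : ℂ) := by
    have h := horth
    rw [hΨ₀dec, hΨ₁dec] at h
    simp only [inner_add_left, inner_add_right, inner_smul_left, inner_smul_right,
      hvv, hψperp, hφv] at h
    simp only [mul_one, mul_zero, add_zero, zero_add] at h
    linear_combination h
  have hat : a * t ≤ r * s := by
    have h2 : ‖(inner ℂ φ ψ : ℂ)‖ ≤ r * s := by
      have := norm_inner_le_norm (𝕜 := ℂ) φ ψ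
      exact this
    have h1 : a * t = ‖(inner ℂ φ ψ : ℂ)‖ := by
      calc a * t = ‖(conj α * β)‖ := by rw [norm_mul, Complex.norm_conj]
        _ = ‖(-(inner ℂ φ ψ : ℂ))‖ := by rw [horth']
        _ = ‖(inner ℂ φ ψ : ℂ)‖ := norm_neg _
    linarith
  exact aux_alg ωm ωp b E₀ E₁ a r t s hδ hb ha0 hr0 ht0 hs0 hn0 hn1 hE0lb hE1lb hE0ub hat
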